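/- Let K be a complete discrete valuation field of characteristic 0 with residue characteristic p > 0, and φ : F → G an isogeny of formal groups over O_K of height 1 whose kernel F[φ] is contained in F(K). Set t := v_K(D(φ)). Then for every nonzero x ∈ F[φ], one has v_K(x) = t/(p-1); in particular (p-1) divides t. -/

import Mathlib

/-- Data of a normalized discrete (additive) valuation on a field `K`:
`v : K → ℤ ∪ {∞}` with `v(x) = ∞ ↔ x = 0`, multiplicative, ultrametric and surjective
(so `K` is a discrete valuation field, `O_K = {v ≥ 0}`, `m_K = {v > 0}`). -/
structure DVF (K : Type) [Field K] where
  v : K → WithTop ℤ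
  v_top_iff : ∀ x : K, v x = ⊤ ↔ x = 0
  v_mul : ∀ x y : K, v (x * y) = v x + v y
  v_add : ∀ x y : K, min (v x) (v y) ≤ v (x + y)
  v_surj : ∀ n : ℤ, ∃ x : K, v x = (n : WithTop ℤ)

namespace DVF

variable {K : Type} [Field K] (V : DVF K)

/-- The sequence `s` converges to `L` in the valuation topology of `V`. -/
def Tendsto (s : ℕ → K) (L : K) : Prop :=
  ∀ N : ℤ, ∃ M : ℕ, ∀ m : ℕ, M ≤ m → (N : WithTop ℤ) ≤ V.v (s m - L)

/-- `K` is complete with respect to the valuation `V`: every Cauchy sequence converges. -/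
def IsComplete : Prop :=
  ∀ s : ℕ → K,
    (∀ N : ℤ, ∃ M : ℕ, ∀ m k : ℕ, M ≤ m → M ≤ k → (N : WithTop ℤ) ≤ V.v (s m - s k)) →
    ∃ L : K, V.Tendsto s L

/-- The residue field `O_K/m_K` (of characteristic `p`) is perfect:
every residue class is a `p`-th power. -/
def ResiduePerfect (p : ℕ) : Prop :=
  ∀ x : K, 0 ≤ V.v x → ∃ y : K, 0 ≤ V.v y ∧ 0 < V.v (x - y ^ p)

/-- The residue field `O_K/m_K` is finite. -/
def ResidueFinite : Prop :=
  ∃ S : Finset K, ∀ x : K, 0 ≤ V.v x → ∃ y ∈ S, 0 < V.v (x - y)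

/-- `K` is Henselian: simple roots of integral polynomials lift from the residue field. -/
def IsHenselian : Prop :=
  ∀ f : Polynomial K, (∀ i : ℕ, 0 ≤ V.v (f.coeff i)) →
    ∀ a : K, 0 ≤ V.v a → 0 < V.v (f.eval a) → V.v (f.derivative.eval a) = 0 →
      ∃ b : K, f.eval b = 0 ∧ 0 < V.v (b - a)


end DVF

/-- `y` is the value of the one-variable power series `φ` at `x` (limit of partial sums). -/
def PSEval {K : Type} [Field K] (V : DVF K) (φ : PowerSeries K) (x y : K) : Prop :=
  V.Tendsto (fun n => ∑ i ∈ Finset.range n, PowerSeries.coeff (R := K) i φ * x ^ i) y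

/-- `z` is the value of the two-variable power series `F` at `(x, y)`. -/
def FEval {K : Type} [Field K] (V : DVF K) (F : MvPowerSeries (Fin 2) K) (x y z : K) : Prop :=
  V.Tendsto (fun n => ∑ i ∈ Finset.range n, ∑ j ∈ Finset.range n,
    MvPowerSeries.coeff (R := K) (Finsupp.single 0 i + Finsupp.single 1 j) F * x ^ i * y ^ j) z

/-- A one-dimensional commutative formal group law `F(X,Y)` over the valuation ring `O_K`
(integral coefficients, `F ≡ X + Y` mod degree 2, commutative and associative;
associativity `F(F(X,Y),Z) = F(X,F(Y,Z))` is written out coefficientwise). -/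
structure FGL (K : Type) [Field K] (V : DVF K) where
  F : MvPowerSeries (Fin 2) K
  int_coeff : ∀ d : Fin 2 →₀ ℕ, 0 ≤ V.v (MvPowerSeries.coeff (R := K) d F)
  const : MvPowerSeries.coeff (R := K) 0 F = 0
  linX : MvPowerSeries.coeff (R := K) (Finsupp.single 0 1) F = 1
  linY : MvPowerSeries.coeff (R := K) (Finsupp.single 1 1) F = 1
  comm : ∀ d : Fin 2 →₀ ℕ,
    MvPowerSeries.coeff (R := K) d F = MvPowerSeries.coeff (R := K) (Finsupp.equivMapDomain (Equiv.swap 0 1) d) F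
  assoc : ∀ i j l : ℕ,
    (∑ k ∈ Finset.range (i + j + 1),
      MvPowerSeries.coeff (R := K) (Finsupp.single 0 k + Finsupp.single 1 l) F *
        MvPowerSeries.coeff (R := K) (Finsupp.single 0 i + Finsupp.single 1 j) (F ^ k)) =
    (∑ k ∈ Finset.range (j + l + 1),
      MvPowerSeries.coeff (R := K) (Finsupp.single 0 i + Finsupp.single 1 k) F *
        MvPowerSeries.coeff (R := K) (Finsupp.single 0 j + Finsupp.single 1 l) (F ^ k))

/-- An isogeny `φ : F → G` of formal groups over `O_K`: a nonzero integral power series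
with `φ(0) = 0` and `φ(F(X,Y)) = G(φ(X),φ(Y))` (written out coefficientwise). -/
structure Isog {K : Type} [Field K] (V : DVF K) (Fg Gg : FGL K V) where
  φ : PowerSeries K
  ne_zero : φ ≠ 0
  int_coeff : ∀ i : ℕ, 0 ≤ V.v (PowerSeries.coeff (R := K) i φ)
  const : PowerSeries.coeff (R := K) 0 φ = 0
  hom : ∀ i j : ℕ,
    (∑ k ∈ Finset.range (i + j + 1),
      PowerSeries.coeff (R := K) k φ *
        MvPowerSeries.coeff (R := K) (Finsupp.single 0 i + Finsupp.single 1 j) (Fg.F ^ k)) =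
    (∑ k ∈ Finset.range (i + j + 1), ∑ l ∈ Finset.range (i + j + 1),
      MvPowerSeries.coeff (R := K) (Finsupp.single 0 k + Finsupp.single 1 l) Gg.F *
        PowerSeries.coeff (R := K) i (φ ^ k) * PowerSeries.coeff (R := K) j (φ ^ l))

/-- The power series `φ` has height `n`: `φ(T) ≡ ψ(T^{p^n}) (mod m_K)`
for some integral `ψ` with `v(ψ'(0)) = 0`. -/
def HasHeight {K : Type} [Field K] (V : DVF K) (p n : ℕ) (φ : PowerSeries K) : Prop :=
  ∃ ψ : PowerSeries K, (∀ i : ℕ, 0 ≤ V.v (PowerSeries.coeff (R := K) i ψ)) ∧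
    V.v (PowerSeries.coeff (R := K) 1 ψ) = 0 ∧
    ∀ j : ℕ, 0 < V.v (PowerSeries.coeff (R := K) j φ -
      (if p ^ n ∣ j then PowerSeries.coeff (R := K) (j / p ^ n) ψ else 0))

namespace DVF

variable {K : Type} [Field K] (V : DVF K)

lemma v0 : V.v 0 = ⊤ := (V.v_top_iff 0).2 rfl

lemma v1 : V.v 1 = 0 := by
  have h := V.v_mul 1 1
  rw [mul_one] at h
  have h1 : V.v 1 ≠ ⊤ := fun ht => one_ne_zero ((V.v_top_iff 1).1 ht)
  lift V.v 1 to ℤ using h1 with a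
  rw [← WithTop.coe_add] at h
  have : a = a + a := WithTop.coe_injective h
  exact_mod_cast (by omega : a = 0)

lemma v_neg (x : K) : V.v (-x) = V.v x := by
  have hm : V.v (-1 : K) = 0 := by
    have h := V.v_mul (-1) (-1)
    rw [neg_mul_neg, one_mul, V.v1] at h
    have h1 : V.v (-1 : K) ≠ ⊤ := fun ht => (neg_ne_zero.2 (one_ne_zero (α := K))) ((V.v_top_iff _).1 ht)
    lift V.v (-1 : K) to ℤ using h1 with a
    rw [← WithTop.coe_add] at h
    have : (0 : ℤ) = a + a := WithTop.coe_injective h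
    exact_mod_cast (by omega : a = 0)
  calc V.v (-x) = V.v ((-1) * x) := by ring_nf
  _ = V.v x := by rw [V.v_mul, hm, zero_add]

lemma v_sub_ge (x y : K) : min (V.v x) (V.v y) ≤ V.v (x - y) := by
  rw [sub_eq_add_neg]
  calc min (V.v x) (V.v y) = min (V.v x) (V.v (-y)) := by rw [V.v_neg]
  _ ≤ _ := V.v_add _ _

lemma v_add_eq_left {x y : K} (h : V.v x < V.v y) : V.v (x + y) = V.v x := by
  rcases lt_or_ge (V.v (x + y)) (V.v x) with hlt | hge
  · exfalso
    have := V.v_add x y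
    rw [min_eq_left h.le] at this
    exact absurd this (not_le.2 hlt)
  · rcases eq_or_lt_of_le hge with he | hlt
    · exact he.symm
    · exfalso
      have h2 : min (V.v (x + y)) (V.v y) ≤ V.v x := by
        have : V.v ((x+y) - y) = V.v x := by ring_nf
        calc min (V.v (x + y)) (V.v y) ≤ V.v ((x+y) - y) := V.v_sub_ge _ _
        _ = V.v x := this
      rcases min_le_iff.1 h2 with h3 | h3
      · exact absurd h3 (not_le.2 hlt)
      · exact absurd h3 (not_le.2 h)

lemma v_sub_eq_left {x y : K} (h : V.v x < V.v y) : V.v (x - y) = V.v x := by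
  rw [sub_eq_add_neg]; exact V.v_add_eq_left (by rwa [V.v_neg])

lemma v_pow (x : K) (n : ℕ) : V.v (x ^ n) = n • V.v x := by
  induction n with
  | zero => simpa using V.v1
  | succ n ih => rw [pow_succ, V.v_mul, ih, succ_nsmul]

lemma v_nat_nonneg (n : ℕ) : 0 ≤ V.v (n : K) := by
  induction n with
  | zero => rw [Nat.cast_zero, V.v0]; exact le_top
  | succ n ih =>
    push_cast
    calc (0 : WithTop ℤ) ≤ min (V.v (n : K)) (V.v (1 : K)) := by
          rw [V.v1]; exact le_min ih le_rfl
    _ ≤ _ := V.v_add _ _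

lemma v_int_nonneg (n : ℤ) : 0 ≤ V.v (n : K) := by
  obtain ⟨m, rfl | rfl⟩ := Int.eq_nat_or_neg n
  · have h2 : (((m : ℤ) : ℤ) : K) = ((m : ℕ) : K) := by push_cast; ring
    rw [h2]; exact V.v_nat_nonneg _
  · have h2 : ((-(m : ℤ) : ℤ) : K) = -((m : ℕ) : K) := by push_cast; ring
    rw [h2, V.v_neg]; exact V.v_nat_nonneg _

/-- A natural number coprime to p has valuation 0, given v p > 0. -/
lemma v_coprime_eq_zero {p : ℕ} (hp : 0 < V.v (p : K)) {k : ℕ} (hk : Nat.Coprime k p) :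
    V.v (k : K) = 0 := by
  obtain ⟨a, b, hab⟩ : ∃ a b : ℤ, a * k + b * p = 1 := by
    refine ⟨Nat.gcdA k p, Nat.gcdB k p, ?_⟩
    have h2 := Nat.gcd_eq_gcd_ab k p
    rw [Nat.Coprime] at hk
    rw [hk] at h2
    push_cast at h2
    linear_combination -h2
  have h1 : V.v ((a : K) * k + (b : K) * p) = 0 := by
    have : ((a : K) * k + (b : K) * p) = 1 := by
      have := congrArg (fun z : ℤ => (z : K)) hab
      push_cast at this
      simpa using this
    rw [this, V.v1]
  by_contra hne
  have hk0 : 0 ≤ V.v (k : K) := V.v_nat_nonneg k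
  have hkpos : 0 < V.v (k : K) := lt_of_le_of_ne hk0 (Ne.symm hne)
  have t1 : 0 < V.v ((a : K) * k) := by
    rw [V.v_mul]
    calc (0:WithTop ℤ) < V.v (k:K) := hkpos
    _ = 0 + V.v (k:K) := (zero_add _).symm
    _ ≤ V.v (a:K) + V.v (k:K) := add_le_add_left (v_int_nonneg V a) _
  have t2 : 0 < V.v ((b : K) * p) := by
    rw [V.v_mul]
    calc (0:WithTop ℤ) < V.v (p:K) := hp
    _ = 0 + V.v (p:K) := (zero_add _).symm
    _ ≤ V.v (b:K) + V.v (p:K) := add_le_add_left (v_int_nonneg V b) _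
  have : 0 < V.v ((a : K) * k + (b : K) * p) := by
    calc (0:WithTop ℤ) < min (V.v ((a:K)*k)) (V.v ((b:K)*p)) := lt_min t1 t2
    _ ≤ _ := V.v_add _ _
  rw [h1] at this
  exact lt_irrefl _ this

lemma v_finsetSum {ι : Type*} (s : Finset ι) (f : ι → K) {c : WithTop ℤ}
    (h : ∀ i ∈ s, c ≤ V.v (f i)) : c ≤ V.v (∑ i ∈ s, f i) := by
  classical
  induction s using Finset.induction_on with
  | empty => simp [V.v0]
  | @insert a s' hx ih =>
    rw [Finset.sum_insert hx]
    calc c ≤ min (V.v (f a)) (V.v (∑ i ∈ s', f i)) :=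
          le_min (h a (Finset.mem_insert_self a s')) (ih fun i hi => h i (Finset.mem_insert_of_mem hi))
    _ ≤ _ := V.v_add _ _

lemma eq_of_v_gt_all {x : K} (h : ∀ N : ℤ, (N : WithTop ℤ) ≤ V.v x) : x = 0 := by
  by_contra hx
  have hne : V.v x ≠ ⊤ := fun ht => hx ((V.v_top_iff x).1 ht)
  lift V.v x to ℤ using hne with a ha
  have := h (a + 1)
  rw [WithTop.coe_le_coe] at this
  omega

lemma tendsto_unique {s : ℕ → K} {L L' : K} (h : V.Tendsto s L) (h' : V.Tendsto s L') :
    L = L' := by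
  have : ∀ N : ℤ, (N : WithTop ℤ) ≤ V.v (L - L') := by
    intro N
    obtain ⟨M, hM⟩ := h N
    obtain ⟨M', hM'⟩ := h' N
    have h1 := hM (max M M') (le_max_left _ _)
    have h2 := hM' (max M M') (le_max_right _ _)
    have : L - L' = (s (max M M') - L') - (s (max M M') - L) := by ring
    rw [this]
    calc (N : WithTop ℤ) ≤ min (V.v (s (max M M') - L')) (V.v (s (max M M') - L)) :=
          le_min h2 h1
    _ ≤ _ := V.v_sub_ge _ _
  exact sub_eq_zero.1 (V.eq_of_v_gt_all this)

lemma tendsto_const (c : K) : V.Tendsto (fun _ => c) c := by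
  intro N; exact ⟨0, fun m _ => by simpa [V.v0] using le_top⟩

lemma tendsto_add {s s' : ℕ → K} {L L' : K} (h : V.Tendsto s L) (h' : V.Tendsto s' L') :
    V.Tendsto (fun n => s n + s' n) (L + L') := by
  intro N
  obtain ⟨M, hM⟩ := h N
  obtain ⟨M', hM'⟩ := h' N
  refine ⟨max M M', fun m hm => ?_⟩
  have e : s m + s' m - (L + L') = (s m - L) + (s' m - L') := by ring
  rw [e]
  calc (N : WithTop ℤ) ≤ min (V.v (s m - L)) (V.v (s' m - L')) :=
        le_min (hM m (le_of_max_le_left hm)) (hM' m (le_of_max_le_right hm))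
  _ ≤ _ := V.v_add _ _

lemma tendsto_neg {s : ℕ → K} {L : K} (h : V.Tendsto s L) :
    V.Tendsto (fun n => - s n) (-L) := by
  intro N
  obtain ⟨M, hM⟩ := h N
  refine ⟨M, fun m hm => ?_⟩
  have e : -s m - (-L) = -(s m - L) := by ring
  rw [e, V.v_neg]
  exact hM m hm

lemma tendsto_sub {s s' : ℕ → K} {L L' : K} (h : V.Tendsto s L) (h' : V.Tendsto s' L') :
    V.Tendsto (fun n => s n - s' n) (L - L') := by
  have := V.tendsto_add h (V.tendsto_neg h')
  simpa [sub_eq_add_neg] using this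

lemma tendsto_mul_const {s : ℕ → K} {L : K} (c : K) (h : V.Tendsto s L) :
    V.Tendsto (fun n => c * s n) (c * L) := by
  intro N
  by_cases hc : c = 0
  · exact ⟨0, fun m _ => by simp [hc, V.v0]⟩
  have hne : V.v c ≠ ⊤ := fun ht => hc ((V.v_top_iff c).1 ht)
  lift V.v c to ℤ using hne with a ha
  obtain ⟨M, hM⟩ := h (N - a)
  refine ⟨M, fun m hm => ?_⟩
  have e : c * s m - c * L = c * (s m - L) := by ring
  rw [e, V.v_mul, ← ha]
  calc (N : WithTop ℤ) = (a : WithTop ℤ) + ((N - a : ℤ) : WithTop ℤ) := by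
        rw [← WithTop.coe_add]; norm_num
  _ ≤ (a : WithTop ℤ) + V.v (s m - L) := add_le_add_right (hM m hm) _

/-- a limit of a sequence whose terms all have valuation ≥ c has valuation ≥ c -/
lemma v_lim_ge {s : ℕ → K} {L : K} (h : V.Tendsto s L) {c : WithTop ℤ} {M₀ : ℕ}
    (hc : ∀ n, M₀ ≤ n → c ≤ V.v (s n)) : c ≤ V.v L := by
  rcases eq_or_ne c ⊤ with rfl | hct
  · have : ∀ n, M₀ ≤ n → s n = 0 := fun n hn => (V.v_top_iff _).1 (top_le_iff.1 (hc n hn))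
    have h0 : V.Tendsto s 0 := by
      intro N
      exact ⟨M₀, fun m hm => by rw [this m hm, sub_zero, V.v0]; exact le_top⟩
    rw [V.tendsto_unique h h0, V.v0]
  lift c to ℤ using hct with a
  obtain ⟨M, hM⟩ := h a
  set m := max M M₀ with hm
  have e : L = s m - (s m - L) := by ring
  rw [e]
  calc (a : WithTop ℤ) ≤ min (V.v (s m)) (V.v (s m - L)) :=
        le_min (hc m (le_max_right _ _)) (hM m (le_max_left _ _))
  _ ≤ _ := V.v_sub_ge _ _

/-- if eventually v (s n) = c (finite) then v L = c -/
lemma v_lim_eq {s : ℕ → K} {L : K} (h : V.Tendsto s L) {c : ℤ} {M₀ : ℕ}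
    (hc : ∀ n, M₀ ≤ n → V.v (s n) = (c : WithTop ℤ)) : V.v L = (c : WithTop ℤ) := by
  obtain ⟨M, hM⟩ := h (c + 1)
  set m := max M M₀ with hm
  have h1 : V.v (s m - L) > (c : WithTop ℤ) := by
    calc (c : WithTop ℤ) < ((c + 1 : ℤ) : WithTop ℤ) := by
          rw [WithTop.coe_lt_coe]; omega
    _ ≤ _ := hM m (le_max_left _ _)
  have h2 : V.v (s m) = (c : WithTop ℤ) := hc m (le_max_right _ _)
  have e : L = s m + (-(s m - L)) := by ring
  rw [e, V.v_add_eq_left (by rw [V.v_neg, h2]; exact h1)]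
  exact h2

/-- Cauchy with explicit terms: series with terms of growing valuation converge -/
lemma series_converges (hcomp : V.IsComplete) (a : ℕ → K)
    (hb : ∀ N : ℤ, ∃ M : ℕ, ∀ j, M ≤ j → (N : WithTop ℤ) ≤ V.v (a j)) :
    ∃ L, V.Tendsto (fun n => ∑ j ∈ Finset.range n, a j) L := by
  apply hcomp
  intro N
  obtain ⟨M, hM⟩ := hb N
  refine ⟨M, fun m k hm hk => ?_⟩
  wlog hmk : k ≤ m generalizing m k
  · have := this k m hk hm (le_of_not_ge hmk)
    have e : ∑ j ∈ Finset.range m, a j - ∑ j ∈ Finset.range k, a j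
        = -((∑ j ∈ Finset.range k, a j) - ∑ j ∈ Finset.range m, a j) := by ring
    rw [e, V.v_neg]
    exact this
  have e : ∑ j ∈ Finset.range m, a j - ∑ j ∈ Finset.range k, a j
      = ∑ j ∈ (Finset.range m \ Finset.range k), a j := by
    rw [Finset.sum_sdiff_eq_sub (Finset.range_subset_range.2 hmk)]
  rw [e]
  apply V.v_finsetSum
  intro i hi
  rw [Finset.mem_sdiff, Finset.mem_range, Finset.mem_range] at hi
  exact hM i (by omega)

lemma one_le_of_pos {c : WithTop ℤ} (h : 0 < c) : 1 ≤ c := by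
  rcases eq_or_ne c ⊤ with rfl | hc
  · exact le_top
  lift c to ℤ using hc with a
  rw [← WithTop.coe_zero, WithTop.coe_lt_coe] at h
  rw [← WithTop.coe_one, WithTop.coe_le_coe]
  omega

lemma nsmul_ge (n : ℕ) {c : WithTop ℤ} (h : 1 ≤ c) : ((n : ℤ) : WithTop ℤ) ≤ n • c := by
  induction n with
  | zero => simp
  | succ n ih =>
    rw [succ_nsmul]
    calc (((n : ℤ) + 1 : ℤ) : WithTop ℤ) = ((n : ℤ) : WithTop ℤ) + ((1 : ℤ) : WithTop ℤ) := by
          rw [← WithTop.coe_add]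
    _ ≤ n • c + c := add_le_add ih (by simpa using h)
  
lemma tendsto_congr' {s s' : ℕ → K} {L : K} (h : ∀ n, s n = s' n) (ht : V.Tendsto s L) :
    V.Tendsto s' L := by
  intro N
  obtain ⟨M, hM⟩ := ht N
  exact ⟨M, fun m hm => by rw [← h m]; exact hM m hm⟩

lemma tendsto_shift {s : ℕ → K} {L : K} (h : V.Tendsto s L) :
    V.Tendsto (fun n => s (n + 1)) L := by
  intro N
  obtain ⟨M, hM⟩ := h N
  exact ⟨M, fun m hm => hM (m+1) (by omega)⟩

lemma tendsto_unshift {s : ℕ → K} {L : K} (h : V.Tendsto (fun n => s (n + 1)) L) :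
    V.Tendsto s L := by
  intro N
  obtain ⟨M, hM⟩ := h N
  exact ⟨M + 1, fun m hm => by
    have := hM (m - 1) (by omega)
    simpa [Nat.sub_add_cancel (by omega : 1 ≤ m)] using this⟩

/-- Evaluation of a series given by coefficients `c` at `z`, with value `L`. -/
def SEval (c : ℕ → K) (z L : K) : Prop :=
  V.Tendsto (fun n => ∑ i ∈ Finset.range n, c i * z ^ i) L

lemma term_v_ge {c : ℕ → K} (hc : ∀ i, 0 ≤ V.v (c i)) {z : K} (hz : 0 < V.v z) (i : ℕ) :
    ((i : ℤ) : WithTop ℤ) ≤ V.v (c i * z ^ i) := by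
  rw [V.v_mul, V.v_pow]
  calc ((i : ℤ) : WithTop ℤ) ≤ i • V.v z := nsmul_ge i (one_le_of_pos hz)
  _ = 0 + i • V.v z := (zero_add _).symm
  _ ≤ _ := add_le_add_left (hc i) _

lemma seval_exists (hcomp : V.IsComplete) {c : ℕ → K} (hc : ∀ i, 0 ≤ V.v (c i))
    {z : K} (hz : 0 < V.v z) : ∃ L, V.SEval c z L := by
  apply V.series_converges hcomp
  intro N
  refine ⟨N.toNat, fun j hj => ?_⟩
  calc (N : WithTop ℤ) ≤ ((j : ℤ) : WithTop ℤ) := by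
        rw [WithTop.coe_le_coe]; omega
  _ ≤ _ := V.term_v_ge hc hz j

lemma seval_v_ge {c : ℕ → K} {z L : K} (h : V.SEval c z L) {B : WithTop ℤ}
    (hB : ∀ i, B ≤ V.v (c i * z ^ i)) : B ≤ V.v L := by
  apply V.v_lim_ge h (M₀ := 0)
  intro n _
  exact V.v_finsetSum _ _ (fun i _ => hB i)

/-- Division of a power series by a root: if `c` evaluates to `0` at `z ≠ 0`,
there is an integral series `ψ` with `c = (T - z)·ψ` coefficientwise. -/
lemma div_root (hcomp : V.IsComplete) {c : ℕ → K} (hc : ∀ i, 0 ≤ V.v (c i))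
    {z : K} (hz : 0 < V.v z) (hroot : V.SEval c z 0) :
    ∃ ψ : ℕ → K,
      (∀ n, V.Tendsto (fun m => ∑ i ∈ Finset.range m, c (n + 1 + i) * z ^ i) (ψ n)) ∧
      (∀ n, 0 ≤ V.v (ψ n)) ∧
      (c 0 = - (z * ψ 0)) ∧
      (∀ n, c (n + 1) = ψ n - z * ψ (n + 1)) ∧
      (∀ y, 0 < V.v y → V.SEval c y 0 → y ≠ z → V.SEval ψ y 0) := by
  have hex : ∀ n, ∃ L, V.Tendsto (fun m => ∑ i ∈ Finset.range m, c (n + 1 + i) * z ^ i) L := by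
    intro n
    apply V.series_converges hcomp
    intro N
    refine ⟨N.toNat, fun j hj => ?_⟩
    calc (N : WithTop ℤ) ≤ ((j : ℤ) : WithTop ℤ) := by rw [WithTop.coe_le_coe]; omega
    _ ≤ _ := V.term_v_ge (fun i => hc _) hz j
  choose ψ hψ using hex
  have hint : ∀ n, 0 ≤ V.v (ψ n) := by
    intro n
    apply V.v_lim_ge (hψ n) (M₀ := 0)
    intro m _
    apply V.v_finsetSum
    intro i _
    calc (0 : WithTop ℤ) ≤ ((i : ℤ) : WithTop ℤ) := by
          rw [← WithTop.coe_zero, WithTop.coe_le_coe]; omega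
    _ ≤ _ := V.term_v_ge (fun i => hc _) hz i
  have hc0 : c 0 = - (z * ψ 0) := by
    -- z * S_0(m) = P_{m+1} - c 0
    have key : ∀ m : ℕ, z * (∑ i ∈ Finset.range m, c (0 + 1 + i) * z ^ i)
        = (∑ j ∈ Finset.range (m + 1), c j * z ^ j) - c 0 := by
      intro m
      rw [Finset.sum_range_succ' (fun j => c j * z ^ j) m]
      rw [Finset.mul_sum]
      simp only [pow_zero, mul_one, pow_succ]
      rw [add_sub_cancel_right]
      apply Finset.sum_congr rfl
      intro i _
      ring_nf
    have t1 : V.Tendsto (fun m => z * (∑ i ∈ Finset.range m, c (0 + 1 + i) * z ^ i))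
        (z * ψ 0) := V.tendsto_mul_const z (hψ 0)
    have t2 : V.Tendsto (fun m => (∑ j ∈ Finset.range (m + 1), c j * z ^ j) - c 0)
        (0 - c 0) := V.tendsto_sub (V.tendsto_shift hroot) (V.tendsto_const _)
    have := V.tendsto_unique t1 (V.tendsto_congr' (fun m => (key m).symm) t2)
    rw [this]
    ring
  have hrec : ∀ n, c (n + 1) = ψ n - z * ψ (n + 1) := by
    intro n
    -- S_n(m+1) - z * S_{n+1}(m) = c (n+1)
    have key : ∀ m : ℕ, (∑ i ∈ Finset.range (m + 1), c (n + 1 + i) * z ^ i)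
        - z * (∑ i ∈ Finset.range m, c (n + 1 + 1 + i) * z ^ i) = c (n + 1) := by
      intro m
      rw [Finset.sum_range_succ' (fun i => c (n + 1 + i) * z ^ i) m]
      rw [Finset.mul_sum]
      simp only [pow_zero, mul_one, Nat.add_zero]
      have : ∀ i, c (n + 1 + (i + 1)) * z ^ (i + 1) = z * (c (n + 1 + 1 + i) * z ^ i) := by
        intro i
        have e : n + 1 + (i + 1) = n + 1 + 1 + i := by omega
        rw [e, pow_succ]
        ring
      rw [Finset.sum_congr rfl (fun i _ => this i)]
      rw [← Finset.mul_sum]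
      ring
    have t1 : V.Tendsto (fun m => (∑ i ∈ Finset.range (m + 1), c (n + 1 + i) * z ^ i)
        - z * (∑ i ∈ Finset.range m, c (n + 1 + 1 + i) * z ^ i)) (ψ n - z * ψ (n + 1)) :=
      V.tendsto_sub (V.tendsto_shift (hψ n)) (V.tendsto_mul_const z (hψ (n + 1)))
    have t2 : V.Tendsto (fun _ : ℕ => c (n + 1)) (c (n + 1)) := V.tendsto_const _
    exact V.tendsto_unique t2 (V.tendsto_congr' (fun m => key m) t1)
  refine ⟨ψ, hψ, hint, hc0, hrec, ?_⟩
  intro y hy hcy hyz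
  obtain ⟨Lψ, hLψ⟩ := V.seval_exists hcomp hint hy
  have key : ∀ n : ℕ, (∑ m ∈ Finset.range (n + 1), c m * y ^ m)
      = y * (∑ m ∈ Finset.range n, ψ m * y ^ m)
        - z * (∑ m ∈ Finset.range (n + 1), ψ m * y ^ m) := by
    intro n
    rw [Finset.sum_range_succ' (fun m => c m * y ^ m) n,
        Finset.sum_range_succ' (fun m => ψ m * y ^ m) n, hc0]
    have hterm : ∀ i, c (i + 1) * y ^ (i + 1)
        = y * (ψ i * y ^ i) - z * (ψ (i + 1) * y ^ (i + 1)) := by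
      intro i; rw [hrec i, pow_succ]; ring
    rw [Finset.sum_congr rfl (fun i _ => hterm i), Finset.sum_sub_distrib,
        ← Finset.mul_sum, ← Finset.mul_sum]
    ring
  have t1 : V.Tendsto (fun n => ∑ m ∈ Finset.range (n + 1), c m * y ^ m) 0 :=
    V.tendsto_shift hcy
  have t2 : V.Tendsto (fun n => y * (∑ m ∈ Finset.range n, ψ m * y ^ m)
      - z * (∑ m ∈ Finset.range (n + 1), ψ m * y ^ m)) (y * Lψ - z * Lψ) :=
    V.tendsto_sub (V.tendsto_mul_const y hLψ) (V.tendsto_mul_const z (V.tendsto_shift hLψ))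
  have h0 : (0 : K) = y * Lψ - z * Lψ :=
    V.tendsto_unique t1 (V.tendsto_congr' (fun m => (key m).symm) t2)
  have hL0 : Lψ = 0 := by
    have : (y - z) * Lψ = 0 := by linear_combination -h0
    rcases mul_eq_zero.1 this with h | h
    · exact absurd (sub_eq_zero.1 h) hyz
    · exact h
  rw [← hL0]
  exact hLψ

lemma v_add_nonneg {x y : WithTop ℤ} (hx : 0 ≤ x) (hy : 0 ≤ y) : (0:WithTop ℤ) ≤ x + y := by
  calc (0:WithTop ℤ) = 0 + 0 := by simp
  _ ≤ x + y := add_le_add hx hy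

lemma v_mul_nonneg {x y : K} (hx : 0 ≤ V.v x) (hy : 0 ≤ V.v y) : 0 ≤ V.v (x * y) := by
  rw [V.v_mul]; exact v_add_nonneg hx hy

/-- Fin 2 monomial decomposition -/
lemma fin2_decomp (d : Fin 2 →₀ ℕ) :
    Finsupp.single (0 : Fin 2) (d 0) + Finsupp.single (1 : Fin 2) (d 1) = d := by
  ext i
  fin_cases i <;> simp [Finsupp.single_apply]

lemma pair_apply0 (i j : ℕ) :
    (Finsupp.single (0 : Fin 2) i + Finsupp.single (1 : Fin 2) j) 0 = i := by
  simp [Finsupp.single_apply]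

lemma pair_apply1 (i j : ℕ) :
    (Finsupp.single (0 : Fin 2) i + Finsupp.single (1 : Fin 2) j) 1 = j := by
  simp [Finsupp.single_apply]

lemma pair_eq_iff (i j : ℕ) (d : Fin 2 →₀ ℕ) :
    Finsupp.single (0 : Fin 2) i + Finsupp.single (1 : Fin 2) j = d ↔ i = d 0 ∧ j = d 1 := by
  constructor
  · intro h
    constructor
    · rw [← h]; exact (pair_apply0 i j).symm
    · rw [← h]; exact (pair_apply1 i j).symm
  · rintro ⟨rfl, rfl⟩
    exact fin2_decomp d

section MvPS
open MvPowerSeries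

lemma mv_int_mul {f g : MvPowerSeries (Fin 2) K}
    (hf : ∀ d, 0 ≤ V.v (coeff (R := K) d f)) (hg : ∀ d, 0 ≤ V.v (coeff (R := K) d g)) :
    ∀ d, 0 ≤ V.v (coeff (R := K) d (f * g)) := by
  intro d
  rw [coeff_mul]
  exact V.v_finsetSum _ _ (fun p _ => V.v_mul_nonneg (hf p.1) (hg p.2))

lemma mv_int_pow {f : MvPowerSeries (Fin 2) K}
    (hf : ∀ d, 0 ≤ V.v (coeff (R := K) d f)) (k : ℕ) :
    ∀ d, 0 ≤ V.v (coeff (R := K) d (f ^ k)) := by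
  induction k with
  | zero =>
    intro d
    rw [pow_zero]
    by_cases hd : d = 0
    · subst hd; rw [MvPowerSeries.coeff_zero_one, V.v1]
    · rw [MvPowerSeries.coeff_one, if_neg hd, V.v0]; exact le_top
  | succ k ih =>
    intro d
    rw [pow_succ]
    exact V.mv_int_mul ih hf d

lemma mv_pow_low_zero {f : MvPowerSeries (Fin 2) K}
    (hf : MvPowerSeries.coeff (R := K) 0 f = 0) (k : ℕ) :
    ∀ d : Fin 2 →₀ ℕ, d 0 + d 1 < k → coeff (R := K) d (f ^ k) = 0 := by
  induction k with
  | zero => intro d hd; omega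
  | succ k ih =>
    intro d hd
    rw [pow_succ, coeff_mul]
    apply Finset.sum_eq_zero
    intro p hp
    rw [Finset.HasAntidiagonal.mem_antidiagonal] at hp
    by_cases h2 : p.2 = 0
    · rw [h2] at hp ⊢
      rw [hf, mul_zero]
    · have hpos : 1 ≤ p.2 0 + p.2 1 := by
        by_contra hc
        push_neg at hc
        apply h2
        ext i
        fin_cases i <;> simp <;> omega
      have : p.1 0 + p.1 1 < k := by
        have h0 : p.1 0 + p.2 0 = d 0 := by rw [← hp]; simp
        have h1 : p.1 1 + p.2 1 = d 1 := by rw [← hp]; simp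
        omega
      rw [ih p.1 this, zero_mul]

def MvLowAgree (f g : MvPowerSeries (Fin 2) K) (N : ℕ) : Prop :=
  ∀ d : Fin 2 →₀ ℕ, d 0 + d 1 < N → coeff (R := K) d f = coeff (R := K) d g

lemma mvLowAgree_mul {f g f' g' : MvPowerSeries (Fin 2) K} {N : ℕ}
    (h : MvLowAgree f g N) (h' : MvLowAgree f' g' N) : MvLowAgree (f * f') (g * g') N := by
  intro d hd
  rw [coeff_mul, coeff_mul]
  apply Finset.sum_congr rfl
  intro p hp
  rw [Finset.HasAntidiagonal.mem_antidiagonal] at hp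
  have h0 : p.1 0 + p.2 0 = d 0 := by rw [← hp]; simp
  have h1 : p.1 1 + p.2 1 = d 1 := by rw [← hp]; simp
  rw [h p.1 (by omega), h' p.2 (by omega)]

lemma mvLowAgree_pow {f g : MvPowerSeries (Fin 2) K} {N : ℕ}
    (h : MvLowAgree f g N) (k : ℕ) : MvLowAgree (f ^ k) (g ^ k) N := by
  induction k with
  | zero => intro d hd; rw [pow_zero, pow_zero]
  | succ k ih => rw [pow_succ, pow_succ]; exact mvLowAgree_mul ih h

end MvPS

section OneVar
open PowerSeries

lemma ps_int_mul {f g : PowerSeries K}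
    (hf : ∀ i, 0 ≤ V.v (coeff (R := K) i f)) (hg : ∀ i, 0 ≤ V.v (coeff (R := K) i g)) :
    ∀ i, 0 ≤ V.v (coeff (R := K) i (f * g)) := by
  intro i
  rw [coeff_mul]
  exact V.v_finsetSum _ _ (fun p _ => V.v_mul_nonneg (hf p.1) (hg p.2))

lemma ps_int_pow {f : PowerSeries K}
    (hf : ∀ i, 0 ≤ V.v (coeff (R := K) i f)) (k : ℕ) :
    ∀ i, 0 ≤ V.v (coeff (R := K) i (f ^ k)) := by
  induction k with
  | zero =>
    intro i
    rw [pow_zero, coeff_one]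
    by_cases hi : i = 0
    · rw [if_pos hi, V.v1]
    · rw [if_neg hi, V.v0]; exact le_top
  | succ k ih =>
    intro i
    rw [pow_succ]
    exact V.ps_int_mul ih hf i

lemma ps_pow_low_zero {f : PowerSeries K}
    (hf : PowerSeries.coeff (R := K) 0 f = 0) (k : ℕ) :
    ∀ i : ℕ, i < k → coeff (R := K) i (f ^ k) = 0 := by
  induction k with
  | zero => intro i hi; omega
  | succ k ih =>
    intro i hi
    rw [pow_succ, coeff_mul]
    apply Finset.sum_eq_zero
    intro p hp
    rw [Finset.HasAntidiagonal.mem_antidiagonal] at hp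
    by_cases h2 : p.2 = 0
    · rw [h2, hf, mul_zero]
    · rw [ih p.1 (by omega), zero_mul]

def PsLowAgree (f g : PowerSeries K) (N : ℕ) : Prop :=
  ∀ i : ℕ, i < N → coeff (R := K) i f = coeff (R := K) i g

lemma psLowAgree_mul {f g f' g' : PowerSeries K} {N : ℕ}
    (h : PsLowAgree f g N) (h' : PsLowAgree f' g' N) : PsLowAgree (f * f') (g * g') N := by
  intro i hi
  rw [coeff_mul, coeff_mul]
  apply Finset.sum_congr rfl
  intro p hp
  rw [Finset.HasAntidiagonal.mem_antidiagonal] at hp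
  rw [h p.1 (by omega), h' p.2 (by omega)]

lemma psLowAgree_pow {f g : PowerSeries K} {N : ℕ}
    (h : PsLowAgree f g N) (k : ℕ) : PsLowAgree (f ^ k) (g ^ k) N := by
  induction k with
  | zero => intro i hi; rw [pow_zero, pow_zero]
  | succ k ih => rw [pow_succ, pow_succ]; exact psLowAgree_mul ih h

end OneVar

open MvPolynomial

lemma nsmul_mono {a b : WithTop ℤ} (h : a ≤ b) (n : ℕ) : n • a ≤ n • b := by
  induction n with
  | zero => simp
  | succ n ih => rw [succ_nsmul, succ_nsmul]; exact add_le_add ih h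

lemma nsmul_le_nsmul_of_le {m n : ℕ} (h : m ≤ n) {c : WithTop ℤ} (hc : 0 ≤ c) :
    m • c ≤ n • c := by
  obtain ⟨k, rfl⟩ := Nat.exists_eq_add_of_le h
  rw [add_nsmul]
  calc m • c = m • c + 0 := by rw [add_zero]
  _ ≤ m • c + k • c := add_le_add_right (nsmul_nonneg hc k) _

/-- polynomial with coefficients `c i j` on the box `[0,n)²` -/
noncomputable def boxPoly (c : ℕ → ℕ → K) (n : ℕ) : MvPolynomial (Fin 2) K :=
  ∑ ij ∈ Finset.range n ×ˢ Finset.range n,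
    MvPolynomial.monomial (Finsupp.single 0 ij.1 + Finsupp.single 1 ij.2) (c ij.1 ij.2)

lemma boxPoly_coeff (c : ℕ → ℕ → K) (n : ℕ) (d : Fin 2 →₀ ℕ) :
    (boxPoly c n).coeff d = if d 0 < n ∧ d 1 < n then c (d 0) (d 1) else 0 := by
  classical
  rw [boxPoly]
  rw [MvPolynomial.coeff_sum]
  have h1 : ∀ ij : ℕ × ℕ, ij ∈ Finset.range n ×ˢ Finset.range n →
      MvPolynomial.coeff d (MvPolynomial.monomial
        (Finsupp.single 0 ij.1 + Finsupp.single 1 ij.2) (c ij.1 ij.2))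
      = if ij = (d 0, d 1) then c (d 0) (d 1) else 0 := by
    intro ij _
    rw [MvPolynomial.coeff_monomial]
    by_cases h : ij = (d 0, d 1)
    · subst h
      rw [if_pos (fin2_decomp d), if_pos rfl]
    · rw [if_neg, if_neg h]
      intro hcon
      rw [pair_eq_iff] at hcon
      exact h (Prod.ext hcon.1 hcon.2)
  rw [Finset.sum_congr rfl h1, Finset.sum_ite_eq' (Finset.range n ×ˢ Finset.range n) (d 0, d 1)]
  simp [Finset.mem_product]

lemma boxPoly_eval (c : ℕ → ℕ → K) (n : ℕ) (a b : K) :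
    MvPolynomial.eval ![a, b] (boxPoly c n)
      = ∑ i ∈ Finset.range n, ∑ j ∈ Finset.range n, c i j * a ^ i * b ^ j := by
  rw [boxPoly, map_sum, Finset.sum_product]
  apply Finset.sum_congr rfl
  intro i _
  apply Finset.sum_congr rfl
  intro j _
  rw [MvPolynomial.eval_monomial]
  rw [Finsupp.prod_add_index]
  · rw [Finsupp.prod_single_index, Finsupp.prod_single_index]
    · simp [mul_assoc]
    · exact pow_zero _
    · exact pow_zero _
  · intro k _; exact pow_zero _
  · intro k _ m1 m2; exact pow_add _ _ _

/-- fundamental valuation bound for evaluation of a low-degree-vanishing polynomial -/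
lemma v_polyeval_ge (P : MvPolynomial (Fin 2) K) {a b : K} {ε : WithTop ℤ}
    (ha : ε ≤ V.v a) (hb : ε ≤ V.v b) (hε : 0 ≤ ε) (N : ℕ)
    (hint : ∀ d, 0 ≤ V.v (P.coeff d))
    (hlow : ∀ d : Fin 2 →₀ ℕ, d 0 + d 1 < N → P.coeff d = 0) :
    N • ε ≤ V.v (MvPolynomial.eval ![a, b] P) := by
  rw [MvPolynomial.eval_eq']
  apply V.v_finsetSum
  intro d _
  by_cases hd : d 0 + d 1 < N
  · rw [hlow d hd, zero_mul, V.v0]; exact le_top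
  rw [V.v_mul]
  have hprod : V.v (∏ i : Fin 2, ![a, b] i ^ d i) = (d 0) • V.v a + (d 1) • V.v b := by
    rw [Fin.prod_univ_two, V.v_mul, V.v_pow, V.v_pow]
    norm_num
  rw [hprod]
  calc N • ε ≤ (d 0 + d 1) • ε := nsmul_le_nsmul_of_le (by omega) hε
  _ = (d 0) • ε + (d 1) • ε := add_nsmul _ _ _
  _ ≤ (d 0) • V.v a + (d 1) • V.v b := add_le_add (nsmul_mono ha _) (nsmul_mono hb _)
  _ = 0 + ((d 0) • V.v a + (d 1) • V.v b) := (zero_add _).symm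
  _ ≤ V.v (P.coeff d) + ((d 0) • V.v a + (d 1) • V.v b) := add_le_add_left (hint d) _

lemma tendsto_of_close {u w : ℕ → K} {W : K} (hw : V.Tendsto w W)
    (h : ∀ N : ℤ, ∃ M, ∀ n, M ≤ n → (N : WithTop ℤ) ≤ V.v (u n - w n)) :
    V.Tendsto u W := by
  intro N
  obtain ⟨M1, h1⟩ := hw N
  obtain ⟨M2, h2⟩ := h N
  refine ⟨max M1 M2, fun n hn => ?_⟩
  have e : u n - W = (u n - w n) + (w n - W) := by ring
  rw [e]
  calc (N : WithTop ℤ) ≤ min (V.v (u n - w n)) (V.v (w n - W)) :=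
        le_min (h2 n (le_of_max_le_right hn)) (h1 n (le_of_max_le_left hn))
  _ ≤ _ := V.v_add _ _

open MvPolynomial in
lemma aeval_eq_sum (u : Polynomial K) {N : ℕ} (hN : u.natDegree < N) (i : Fin 2) :
    Polynomial.aeval (X i : MvPolynomial (Fin 2) K) u
      = ∑ m ∈ Finset.range N, MvPolynomial.monomial (Finsupp.single i m) (u.coeff m) := by
  conv_lhs => rw [Polynomial.as_sum_range' u N hN]
  rw [map_sum]
  apply Finset.sum_congr rfl
  intro m _
  rw [Polynomial.aeval_monomial, MvPolynomial.X_pow_eq_monomial]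
  have : (algebraMap K (MvPolynomial (Fin 2) K)) (u.coeff m) = MvPolynomial.C (u.coeff m) := rfl
  rw [this, MvPolynomial.C_mul_monomial, mul_one]

open MvPolynomial in
lemma coeff_aeval_mul (u w : Polynomial K) (d : Fin 2 →₀ ℕ) :
    MvPolynomial.coeff d
        ((Polynomial.aeval (X 0 : MvPolynomial (Fin 2) K) u)
          * (Polynomial.aeval (X 1 : MvPolynomial (Fin 2) K) w))
      = u.coeff (d 0) * w.coeff (d 1) := by
  classical
  set N := max u.natDegree w.natDegree + 1 with hNdef
  have hu : u.natDegree < N := by omega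
  have hw : w.natDegree < N := by omega
  have key : (Polynomial.aeval (X 0 : MvPolynomial (Fin 2) K) u)
      * (Polynomial.aeval (X 1 : MvPolynomial (Fin 2) K) w)
      = boxPoly (fun i j => u.coeff i * w.coeff j) N := by
    rw [aeval_eq_sum u hu 0, aeval_eq_sum w hw 1, Finset.sum_mul_sum]
    rw [boxPoly, Finset.sum_product]
    apply Finset.sum_congr rfl
    intro m _
    apply Finset.sum_congr rfl
    intro m' _
    rw [MvPolynomial.monomial_mul]
  rw [key, boxPoly_coeff]
  by_cases h : d 0 < N ∧ d 1 < N
  · rw [if_pos h]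
  · rw [if_neg h]
    rcases not_and_or.1 h with h1 | h1
    · rw [Polynomial.coeff_eq_zero_of_natDegree_lt (by omega : u.natDegree < d 0), zero_mul]
    · rw [Polynomial.coeff_eq_zero_of_natDegree_lt (by omega : w.natDegree < d 1), mul_zero]

open MvPolynomial in
lemma eval_aeval (u : Polynomial K) (a b : K) (i : Fin 2) :
    MvPolynomial.eval ![a, b] (Polynomial.aeval (X i : MvPolynomial (Fin 2) K) u)
      = Polynomial.eval (![a, b] i) u := by
  have h1 : Polynomial.aeval (X i : MvPolynomial (Fin 2) K) u
      = Polynomial.eval₂ (algebraMap K (MvPolynomial (Fin 2) K)) (X i) u := rfl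
  rw [h1, Polynomial.hom_eval₂]
  have h2 : (MvPolynomial.eval ![a, b]).comp (algebraMap K (MvPolynomial (Fin 2) K))
      = RingHom.id K := by
    ext c
    simp
  rw [h2, MvPolynomial.eval_X]
  rfl

lemma trunc_eval (φ : PowerSeries K) (n : ℕ) (x : K) :
    Polynomial.eval x (PowerSeries.trunc n φ)
      = ∑ m ∈ Finset.range n, PowerSeries.coeff (R := K) m φ * x ^ m := by
  have hdeg : (PowerSeries.trunc n φ).natDegree < n + 1 := by
    have := PowerSeries.degree_trunc_lt φ n
    have h2 := Polynomial.natDegree_le_iff_degree_le (n := n) (p := PowerSeries.trunc n φ)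
    have : (PowerSeries.trunc n φ).natDegree ≤ n := h2.2 (le_of_lt this)
    omega
  rw [Polynomial.eval_eq_sum_range' hdeg]
  rw [Finset.sum_range_succ]
  rw [PowerSeries.coeff_trunc]
  rw [if_neg (lt_irrefl n), zero_mul, add_zero]
  apply Finset.sum_congr rfl
  intro m hm
  rw [Finset.mem_range] at hm
  rw [PowerSeries.coeff_trunc, if_pos hm]

lemma coeff_poly_pow_coe (P : MvPolynomial (Fin 2) K) (k : ℕ) (d : Fin 2 →₀ ℕ) :
    MvPolynomial.coeff d (P ^ k) = MvPowerSeries.coeff (R := K) d ((P : MvPowerSeries (Fin 2) K) ^ k) := by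
  rw [← MvPolynomial.coe_pow, MvPolynomial.coeff_coe]

end DVF


namespace DVF


variable {K : Type} [Field K]

open MvPolynomial

/-- box truncation of a 2-variable power series as a polynomial -/
noncomputable def Tpoly (Fs : MvPowerSeries (Fin 2) K) (n : ℕ) : MvPolynomial (Fin 2) K :=
  boxPoly (fun i j => MvPowerSeries.coeff (R := K) (Finsupp.single 0 i + Finsupp.single 1 j) Fs) n

lemma Tpoly_coeff (Fs : MvPowerSeries (Fin 2) K) (n : ℕ) (d : Fin 2 →₀ ℕ) :
    (Tpoly Fs n).coeff d = if d 0 < n ∧ d 1 < n then MvPowerSeries.coeff (R := K) d Fs else 0 := by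
  rw [Tpoly, boxPoly_coeff]
  by_cases h : d 0 < n ∧ d 1 < n
  · rw [if_pos h, if_pos h, fin2_decomp]
  · rw [if_neg h, if_neg h]

lemma Tpoly_agree (Fs : MvPowerSeries (Fin 2) K) (n : ℕ) :
    MvLowAgree ((Tpoly Fs n : MvPolynomial (Fin 2) K) : MvPowerSeries (Fin 2) K) Fs n := by
  intro d hd
  rw [MvPolynomial.coeff_coe, Tpoly_coeff, if_pos ⟨by omega, by omega⟩]

theorem comp_root (V : DVF K) (hcomp : V.IsComplete)
    {Fg Gg : FGL K V} (φ : Isog V Fg Gg) {a b : K}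
    (ha : 0 < V.v a) (hb : 0 < V.v b) (hφa : PSEval V φ.φ a 0) (hφb : PSEval V φ.φ b 0) :
    ∃ z : K, 2 • min (V.v a) (V.v b) ≤ V.v (z - (a + b)) ∧
      min (V.v a) (V.v b) ≤ V.v z ∧ 0 < V.v z ∧ PSEval V φ.φ z 0 := by
  classical
  set ε := min (V.v a) (V.v b) with hεdef
  have hε1 : (1 : WithTop ℤ) ≤ ε := one_le_of_pos (lt_min ha hb)
  have hε0 : (0 : WithTop ℤ) ≤ ε := le_trans (by norm_num) hε1
  have hεa : ε ≤ V.v a := min_le_left _ _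
  have hεb : ε ≤ V.v b := min_le_right _ _
  set T : ℕ → MvPolynomial (Fin 2) K := fun n => Tpoly Fg.F n with hTdef
  set zseq : ℕ → K := fun n => MvPolynomial.eval ![a, b] (T n) with hzseqdef
  have hT_int : ∀ n d, 0 ≤ V.v ((T n).coeff d) := by
    intro n d
    rw [hTdef, Tpoly_coeff]
    by_cases h : d 0 < n ∧ d 1 < n
    · rw [if_pos h]; exact Fg.int_coeff d
    · rw [if_neg h, V.v0]; exact le_top
  -- Cauchy estimate
  have hdiff : ∀ m k : ℕ, (min m k : ℕ) • ε ≤ V.v (zseq m - zseq k) := by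
    intro m k
    have e : zseq m - zseq k = MvPolynomial.eval ![a, b] (T m - T k) := by
      rw [map_sub]
    rw [e]
    apply V.v_polyeval_ge _ hεa hεb hε0
    · intro d
      rw [MvPolynomial.coeff_sub]
      calc (0 : WithTop ℤ) ≤ min (V.v ((T m).coeff d)) (V.v ((T k).coeff d)) :=
            le_min (hT_int m d) (hT_int k d)
      _ ≤ _ := V.v_sub_ge _ _
    · intro d hd
      rw [MvPolynomial.coeff_sub, hTdef]
      simp only
      rw [Tpoly_coeff, Tpoly_coeff, if_pos ⟨by omega, by omega⟩, if_pos ⟨by omega, by omega⟩,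
        sub_self]
  obtain ⟨z, hz⟩ : ∃ z, V.Tendsto zseq z := by
    apply hcomp
    intro N
    refine ⟨N.toNat, fun m k hm hk => ?_⟩
    calc (N : WithTop ℤ) ≤ ((min m k : ℕ) : ℤ) := by
          rw [WithTop.coe_le_coe]; omega
    _ ≤ (min m k : ℕ) • ε := nsmul_ge _ hε1
    _ ≤ _ := hdiff m k
  have hzn : ∀ n, 1 ≤ n → ε ≤ V.v (zseq n) := by
    intro n hn
    have := V.v_polyeval_ge (T n) hεa hεb hε0 1 (hT_int n) ?_
    · rw [one_nsmul] at this; exact this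
    · intro d hd
      have h0 : d 0 = 0 := by omega
      have h1 : d 1 = 0 := by omega
      rw [hTdef]
      simp only
      rw [Tpoly_coeff, if_pos ⟨by omega, by omega⟩]
      have hd0 : d = 0 := by
        ext i; fin_cases i
        · exact h0
        · exact h1
      rw [hd0]
      exact Fg.const
  have hzeps : ε ≤ V.v z := V.v_lim_ge hz (M₀ := 1) hzn
  have hzpos : 0 < V.v z := lt_of_lt_of_le (lt_of_lt_of_le (by norm_num) hε1) hzeps
  -- distance from a + b
  have hz2 : 2 • ε ≤ V.v (z - (a + b)) := by
    set lc : ℕ → ℕ → K := fun i j =>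
      if i = 1 ∧ j = 0 then 1 else if i = 0 ∧ j = 1 then 1 else 0 with hlcdef
    have hlin_eval : MvPolynomial.eval ![a, b] (boxPoly lc 2) = a + b := by
      rw [boxPoly_eval]
      rw [Finset.sum_range_succ, Finset.sum_range_succ]
      simp [hlcdef, Finset.sum_range_succ]
      ring
    have htend : V.Tendsto (fun n => zseq n - (a + b)) (z - (a + b)) :=
      V.tendsto_sub hz (V.tendsto_const _)
    apply V.v_lim_ge htend (M₀ := 2)
    intro n hn
    have e : zseq n - (a + b) = MvPolynomial.eval ![a, b] (T n - boxPoly lc 2) := by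
      rw [map_sub, hlin_eval]
    rw [e]
    apply V.v_polyeval_ge _ hεa hεb hε0
    · intro d
      rw [MvPolynomial.coeff_sub]
      have hlc : 0 ≤ V.v ((boxPoly lc 2).coeff d) := by
        rw [boxPoly_coeff]
        by_cases h : d 0 < 2 ∧ d 1 < 2
        · rw [if_pos h, hlcdef]
          by_cases h1 : d 0 = 1 ∧ d 1 = 0
          · simp only [if_pos h1]; rw [V.v1]
          · by_cases h2 : d 0 = 0 ∧ d 1 = 1
            · simp only [if_neg h1, if_pos h2]; rw [V.v1]
            · simp only [if_neg h1, if_neg h2]; rw [V.v0]; exact le_top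
        · rw [if_neg h, V.v0]; exact le_top
      calc (0 : WithTop ℤ) ≤ min (V.v ((T n).coeff d)) (V.v ((boxPoly lc 2).coeff d)) :=
            le_min (hT_int n d) hlc
      _ ≤ _ := V.v_sub_ge _ _
    · intro d hd
      rw [MvPolynomial.coeff_sub, hTdef]
      simp only
      rw [Tpoly_coeff, if_pos ⟨by omega, by omega⟩, boxPoly_coeff, if_pos ⟨by omega, by omega⟩]
      have : (d 0 = 0 ∧ d 1 = 0) ∨ (d 0 = 1 ∧ d 1 = 0) ∨ (d 0 = 0 ∧ d 1 = 1) := by omega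
      have hdec := fin2_decomp d
      rcases this with ⟨h0, h1⟩ | ⟨h0, h1⟩ | ⟨h0, h1⟩
      · have hd0 : d = 0 := by ext i; fin_cases i <;> assumption
        rw [hd0, hlcdef]
        simp only [Fg.const]
        norm_num
      · have hd0 : d = Finsupp.single (0 : Fin 2) 1 := by
          rw [← hdec, h0, h1]
          simp
        rw [hd0, hlcdef]
        simp [Fg.linX, Finsupp.single_apply]
      · have hd0 : d = Finsupp.single (1 : Fin 2) 1 := by
          rw [← hdec, h0, h1]
          simp
        rw [hd0, hlcdef]
        simp [Fg.linY, Finsupp.single_apply]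
  -- evaluation of φ at z
  obtain ⟨W, hW⟩ := V.seval_exists hcomp (c := fun i => PowerSeries.coeff (R := K) i φ.φ)
    φ.int_coeff hzpos
  -- step 5: eval of composed polynomials converges to W
  set P : ℕ → MvPolynomial (Fin 2) K :=
    fun n => ∑ κ ∈ Finset.range n, MvPolynomial.C (PowerSeries.coeff (R := K) κ φ.φ) * (T n) ^ κ
    with hPdef
  have hPeval : ∀ n, MvPolynomial.eval ![a, b] (P n)
      = ∑ κ ∈ Finset.range n, PowerSeries.coeff (R := K) κ φ.φ * (zseq n) ^ κ := by
    intro n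
    rw [hPdef]
    simp only [map_sum, map_mul, map_pow, MvPolynomial.eval_C]
    rfl
  have hPu : V.Tendsto (fun n => MvPolynomial.eval ![a, b] (P n)) W := by
    apply V.tendsto_of_close hW
    intro N
    obtain ⟨M, hM⟩ := hz N
    refine ⟨max M 1, fun n hn => ?_⟩
    have hn1 : 1 ≤ n := le_of_max_le_right hn
    rw [hPeval n]
    have e : (∑ κ ∈ Finset.range n, PowerSeries.coeff (R := K) κ φ.φ * (zseq n) ^ κ)
        - (∑ i ∈ Finset.range n, PowerSeries.coeff (R := K) i φ.φ * z ^ i)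
        = ∑ κ ∈ Finset.range n,
            PowerSeries.coeff (R := K) κ φ.φ * ((∑ i ∈ Finset.range κ, (zseq n) ^ i * z ^ (κ - 1 - i))
              * (zseq n - z)) := by
      rw [← Finset.sum_sub_distrib]
      apply Finset.sum_congr rfl
      intro κ _
      rw [geom_sum₂_mul]
      ring
    rw [e]
    apply V.v_finsetSum
    intro κ _
    rw [V.v_mul, V.v_mul]
    have h1 : 0 ≤ V.v (PowerSeries.coeff (R := K) κ φ.φ) := φ.int_coeff κ
    have h2 : 0 ≤ V.v (∑ i ∈ Finset.range κ, (zseq n) ^ i * z ^ (κ - 1 - i)) := by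
      apply V.v_finsetSum
      intro i _
      apply V.v_mul_nonneg
      · rw [V.v_pow]; exact nsmul_nonneg (le_trans hε0 (hzn n hn1)) _
      · rw [V.v_pow]; exact nsmul_nonneg (le_trans hε0 hzeps) _
    calc (N : WithTop ℤ) ≤ V.v (zseq n - z) := hM n (le_of_max_le_left hn)
    _ = 0 + (0 + V.v (zseq n - z)) := by rw [zero_add, zero_add]
    _ ≤ _ := add_le_add h1 (add_le_add h2 le_rfl)
  -- step 6: the Q polynomials
  set Cc : ℕ → ℕ → K := fun i j => ∑ k ∈ Finset.range (i + j + 1),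
      PowerSeries.coeff (R := K) k φ.φ *
        MvPowerSeries.coeff (R := K) (Finsupp.single 0 i + Finsupp.single 1 j) (Fg.F ^ k) with hCcdef
  set Q : ℕ → MvPolynomial (Fin 2) K := fun n => boxPoly Cc n with hQdef
  have hCc_int : ∀ i j, 0 ≤ V.v (Cc i j) := by
    intro i j
    apply V.v_finsetSum
    intro k _
    exact V.v_mul_nonneg (φ.int_coeff k) (V.mv_int_pow Fg.int_coeff k _)
  have hQ_int : ∀ n d, 0 ≤ V.v ((Q n).coeff d) := by
    intro n d
    rw [hQdef]; simp only
    rw [boxPoly_coeff]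
    by_cases h : d 0 < n ∧ d 1 < n
    · rw [if_pos h]; exact hCc_int _ _
    · rw [if_neg h, V.v0]; exact le_top
  have hP_coeff : ∀ n d, (P n).coeff d
      = ∑ κ ∈ Finset.range n, PowerSeries.coeff (R := K) κ φ.φ *
          MvPowerSeries.coeff (R := K) d (((T n : MvPolynomial (Fin 2) K) : MvPowerSeries (Fin 2) K) ^ κ) := by
    intro n d
    rw [hPdef]
    simp only
    rw [MvPolynomial.coeff_sum]
    apply Finset.sum_congr rfl
    intro κ _
    rw [MvPolynomial.coeff_C_mul, coeff_poly_pow_coe]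
  have hP_int : ∀ n d, 0 ≤ V.v ((P n).coeff d) := by
    intro n d
    rw [hP_coeff]
    apply V.v_finsetSum
    intro κ _
    apply V.v_mul_nonneg (φ.int_coeff κ)
    apply V.mv_int_pow _ κ
    intro e
    rw [MvPolynomial.coeff_coe]
    exact hT_int n e
  have hPQ : ∀ n (d : Fin 2 →₀ ℕ), d 0 + d 1 < n → (P n).coeff d = (Q n).coeff d := by
    intro n d hd
    rw [hP_coeff]
    have e1 : ∀ κ, κ ∈ Finset.range n →
        PowerSeries.coeff (R := K) κ φ.φ *
          MvPowerSeries.coeff (R := K) d (((T n : MvPolynomial (Fin 2) K) : MvPowerSeries (Fin 2) K) ^ κ)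
        = PowerSeries.coeff (R := K) κ φ.φ * MvPowerSeries.coeff (R := K) d (Fg.F ^ κ) := by
      intro κ _
      rw [mvLowAgree_pow (Tpoly_agree Fg.F n) κ d hd]
    rw [Finset.sum_congr rfl e1]
    have e2 : (∑ κ ∈ Finset.range (d 0 + d 1 + 1),
        PowerSeries.coeff (R := K) κ φ.φ * MvPowerSeries.coeff (R := K) d (Fg.F ^ κ))
        = ∑ κ ∈ Finset.range n,
          PowerSeries.coeff (R := K) κ φ.φ * MvPowerSeries.coeff (R := K) d (Fg.F ^ κ) := by
      apply Finset.sum_subset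
      · intro x hx
        rw [Finset.mem_range] at *
        omega
      · intro κ _ hκ
        rw [Finset.mem_range] at hκ
        rw [mv_pow_low_zero Fg.const κ d (by omega), mul_zero]
    rw [← e2]
    rw [hQdef]; simp only
    rw [boxPoly_coeff, if_pos ⟨by omega, by omega⟩, hCcdef]
    simp only
    rw [fin2_decomp d]
  have hQu : V.Tendsto (fun n => MvPolynomial.eval ![a, b] (Q n)) W := by
    apply V.tendsto_of_close hPu
    intro N
    refine ⟨N.toNat, fun n hn => ?_⟩
    have e : MvPolynomial.eval ![a, b] (Q n) - MvPolynomial.eval ![a, b] (P n)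
        = MvPolynomial.eval ![a, b] (Q n - P n) := by rw [map_sub]
    rw [e]
    calc (N : WithTop ℤ) ≤ ((n : ℕ) : ℤ) := by rw [WithTop.coe_le_coe]; omega
    _ ≤ n • ε := nsmul_ge _ hε1
    _ ≤ _ := by
      apply V.v_polyeval_ge _ hεa hεb hε0
      · intro d
        rw [MvPolynomial.coeff_sub]
        calc (0 : WithTop ℤ) ≤ min (V.v ((Q n).coeff d)) (V.v ((P n).coeff d)) :=
              le_min (hQ_int n d) (hP_int n d)
        _ ≤ _ := V.v_sub_ge _ _
      · intro d hd
        rw [MvPolynomial.coeff_sub, hPQ n d hd, sub_self]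
  -- step 7: the S polynomials (G side)
  set q : ℕ → Polynomial K := fun n => PowerSeries.trunc n φ.φ with hqdef
  set Gc : ℕ → ℕ → K := fun k l =>
      MvPowerSeries.coeff (R := K) (Finsupp.single 0 k + Finsupp.single 1 l) Gg.F with hGcdef
  set S : ℕ → MvPolynomial (Fin 2) K := fun n =>
      ∑ kl ∈ Finset.range n ×ˢ Finset.range n,
        MvPolynomial.C (Gc kl.1 kl.2) *
          ((Polynomial.aeval (MvPolynomial.X 0 : MvPolynomial (Fin 2) K) (q n)) ^ kl.1 *
           (Polynomial.aeval (MvPolynomial.X 1 : MvPolynomial (Fin 2) K) (q n)) ^ kl.2)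
      with hSdef
  have hq_agree : ∀ n, PsLowAgree ((q n : Polynomial K) : PowerSeries K) φ.φ n := by
    intro n i hi
    rw [hqdef]
    simp only
    rw [Polynomial.coeff_coe, PowerSeries.coeff_trunc, if_pos hi]
  have hq_int : ∀ n i, 0 ≤ V.v (PowerSeries.coeff (R := K) i ((q n : Polynomial K) : PowerSeries K)) := by
    intro n i
    rw [hqdef]; simp only
    rw [Polynomial.coeff_coe, PowerSeries.coeff_trunc]
    by_cases h : i < n
    · rw [if_pos h]; exact φ.int_coeff i
    · rw [if_neg h, V.v0]; exact le_top
  have hS_coeff : ∀ n d, (S n).coeff d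
      = ∑ kl ∈ Finset.range n ×ˢ Finset.range n,
          Gc kl.1 kl.2 * (PowerSeries.coeff (R := K) (d 0) (((q n : Polynomial K) : PowerSeries K) ^ kl.1)
            * PowerSeries.coeff (R := K) (d 1) (((q n : Polynomial K) : PowerSeries K) ^ kl.2)) := by
    intro n d
    rw [hSdef]
    simp only
    rw [MvPolynomial.coeff_sum]
    apply Finset.sum_congr rfl
    intro kl _
    rw [MvPolynomial.coeff_C_mul]
    rw [← map_pow (Polynomial.aeval (X 0 : MvPolynomial (Fin 2) K)), ← map_pow (Polynomial.aeval (X 1 : MvPolynomial (Fin 2) K)), coeff_aeval_mul]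
    rw [← Polynomial.coe_pow, ← Polynomial.coe_pow, Polynomial.coeff_coe, Polynomial.coeff_coe]
  have hS_int : ∀ n d, 0 ≤ V.v ((S n).coeff d) := by
    intro n d
    rw [hS_coeff]
    apply V.v_finsetSum
    intro kl _
    apply V.v_mul_nonneg (Gg.int_coeff _)
    exact V.v_mul_nonneg (V.ps_int_pow (hq_int n) _ _) (V.ps_int_pow (hq_int n) _ _)
  have hSQ : ∀ n (d : Fin 2 →₀ ℕ), d 0 + d 1 < n → (S n).coeff d = (Q n).coeff d := by
    intro n d hd
    rw [hS_coeff]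
    have e1 : ∀ kl : ℕ × ℕ, kl ∈ Finset.range n ×ˢ Finset.range n →
        Gc kl.1 kl.2 * (PowerSeries.coeff (R := K) (d 0) (((q n : Polynomial K) : PowerSeries K) ^ kl.1)
          * PowerSeries.coeff (R := K) (d 1) (((q n : Polynomial K) : PowerSeries K) ^ kl.2))
        = Gc kl.1 kl.2 * (PowerSeries.coeff (R := K) (d 0) (φ.φ ^ kl.1)
          * PowerSeries.coeff (R := K) (d 1) (φ.φ ^ kl.2)) := by
      intro kl _
      rw [psLowAgree_pow (hq_agree n) kl.1 (d 0) (by omega),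
          psLowAgree_pow (hq_agree n) kl.2 (d 1) (by omega)]
    rw [Finset.sum_congr rfl e1]
    have e2 : (∑ kl ∈ Finset.range (d 0 + d 1 + 1) ×ˢ Finset.range (d 0 + d 1 + 1),
        Gc kl.1 kl.2 * (PowerSeries.coeff (R := K) (d 0) (φ.φ ^ kl.1)
          * PowerSeries.coeff (R := K) (d 1) (φ.φ ^ kl.2)))
        = ∑ kl ∈ Finset.range n ×ˢ Finset.range n,
          Gc kl.1 kl.2 * (PowerSeries.coeff (R := K) (d 0) (φ.φ ^ kl.1)
            * PowerSeries.coeff (R := K) (d 1) (φ.φ ^ kl.2)) := by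
      apply Finset.sum_subset
      · intro x hx
        rw [Finset.mem_product] at *
        rw [Finset.mem_range, Finset.mem_range] at *
        constructor <;> [skip; skip] <;> omega
      · intro kl _ hkl
        rw [Finset.mem_product] at hkl
        rw [not_and_or] at hkl
        rcases hkl with h | h
        · rw [Finset.mem_range] at h
          rw [ps_pow_low_zero φ.const kl.1 (d 0) (by omega), zero_mul, mul_zero]
        · rw [Finset.mem_range] at h
          rw [ps_pow_low_zero φ.const kl.2 (d 1) (by omega), mul_zero, mul_zero]
    rw [← e2]
    have e3 : (∑ kl ∈ Finset.range (d 0 + d 1 + 1) ×ˢ Finset.range (d 0 + d 1 + 1),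
        Gc kl.1 kl.2 * (PowerSeries.coeff (R := K) (d 0) (φ.φ ^ kl.1)
          * PowerSeries.coeff (R := K) (d 1) (φ.φ ^ kl.2)))
        = ∑ k ∈ Finset.range (d 0 + d 1 + 1), ∑ l ∈ Finset.range (d 0 + d 1 + 1),
            MvPowerSeries.coeff (R := K) (Finsupp.single 0 k + Finsupp.single 1 l) Gg.F *
              PowerSeries.coeff (R := K) (d 0) (φ.φ ^ k) * PowerSeries.coeff (R := K) (d 1) (φ.φ ^ l) := by
      rw [Finset.sum_product]
      apply Finset.sum_congr rfl
      intro k _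
      apply Finset.sum_congr rfl
      intro l _
      rw [hGcdef]
      ring
    rw [e3, ← φ.hom (d 0) (d 1)]
    rw [hQdef]; simp only
    rw [boxPoly_coeff, if_pos ⟨by omega, by omega⟩, hCcdef]
  have hQS_close : ∀ n : ℕ, n • ε ≤ V.v (MvPolynomial.eval ![a, b] (Q n)
      - MvPolynomial.eval ![a, b] (S n)) := by
    intro n
    rw [← map_sub]
    apply V.v_polyeval_ge _ hεa hεb hε0
    · intro d
      rw [MvPolynomial.coeff_sub]
      calc (0 : WithTop ℤ) ≤ min (V.v ((Q n).coeff d)) (V.v ((S n).coeff d)) :=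
            le_min (hQ_int n d) (hS_int n d)
      _ ≤ _ := V.v_sub_ge _ _
    · intro d hd
      rw [MvPolynomial.coeff_sub, hSQ n d hd, sub_self]
  -- step 8: eval S n tends to 0
  have hSeval : ∀ n, MvPolynomial.eval ![a, b] (S n)
      = ∑ kl ∈ Finset.range n ×ˢ Finset.range n,
          Gc kl.1 kl.2 * ((Polynomial.eval a (q n)) ^ kl.1 * (Polynomial.eval b (q n)) ^ kl.2) := by
    intro n
    rw [hSdef]
    simp only [map_sum, map_mul, map_pow, MvPolynomial.eval_C]
    apply Finset.sum_congr rfl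
    intro kl _
    rw [eval_aeval, eval_aeval]
    simp
  have hA : ∀ n, Polynomial.eval a (q n) = ∑ m ∈ Finset.range n, PowerSeries.coeff (R := K) m φ.φ * a ^ m :=
    fun n => trunc_eval φ.φ n a
  have hB : ∀ n, Polynomial.eval b (q n) = ∑ m ∈ Finset.range n, PowerSeries.coeff (R := K) m φ.φ * b ^ m :=
    fun n => trunc_eval φ.φ n b
  have hA_nonneg : ∀ n, 0 ≤ V.v (Polynomial.eval a (q n)) := by
    intro n
    rw [hA]
    apply V.v_finsetSum
    intro m _
    apply V.v_mul_nonneg (φ.int_coeff m)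
    rw [V.v_pow]; exact nsmul_nonneg ha.le _
  have hB_nonneg : ∀ n, 0 ≤ V.v (Polynomial.eval b (q n)) := by
    intro n
    rw [hB]
    apply V.v_finsetSum
    intro m _
    apply V.v_mul_nonneg (φ.int_coeff m)
    rw [V.v_pow]; exact nsmul_nonneg hb.le _
  have hSv : ∀ n, min (V.v (Polynomial.eval a (q n))) (V.v (Polynomial.eval b (q n)))
      ≤ V.v (MvPolynomial.eval ![a, b] (S n)) := by
    intro n
    rw [hSeval]
    apply V.v_finsetSum
    intro kl _
    by_cases h00 : kl = (0, 0)
    · rw [h00]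
      have : Gc 0 0 = 0 := by
        rw [hGcdef]
        simp only
        have : (Finsupp.single (0 : Fin 2) 0 + Finsupp.single (1 : Fin 2) 0) = 0 := by simp
        rw [this]
        exact Gg.const
      simp only [this]
      rw [zero_mul, V.v0]
      exact le_top
    · rw [V.v_mul, V.v_mul, V.v_pow, V.v_pow]
      have hG : 0 ≤ V.v (Gc kl.1 kl.2) := Gg.int_coeff _
      rcases Nat.eq_zero_or_pos kl.1 with h1 | h1
      · have h2 : 1 ≤ kl.2 := by
          rcases Nat.eq_zero_or_pos kl.2 with h2 | h2
          · exact absurd (Prod.ext h1 h2) h00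
          · exact h2
        calc min (V.v (Polynomial.eval a (q n))) (V.v (Polynomial.eval b (q n)))
            ≤ V.v (Polynomial.eval b (q n)) := min_le_right _ _
        _ ≤ kl.2 • V.v (Polynomial.eval b (q n)) := by
            calc V.v (Polynomial.eval b (q n))
                = 1 • V.v (Polynomial.eval b (q n)) := (one_nsmul _).symm
            _ ≤ _ := nsmul_le_nsmul_of_le h2 (hB_nonneg n)
        _ = 0 + (0 + kl.2 • V.v (Polynomial.eval b (q n))) := by rw [zero_add, zero_add]
        _ ≤ _ := add_le_add hG (add_le_add (by rw [h1, zero_nsmul]) le_rfl)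
      · calc min (V.v (Polynomial.eval a (q n))) (V.v (Polynomial.eval b (q n)))
            ≤ V.v (Polynomial.eval a (q n)) := min_le_left _ _
        _ ≤ kl.1 • V.v (Polynomial.eval a (q n)) := by
            calc V.v (Polynomial.eval a (q n))
                = 1 • V.v (Polynomial.eval a (q n)) := (one_nsmul _).symm
            _ ≤ _ := nsmul_le_nsmul_of_le h1 (hA_nonneg n)
        _ = 0 + (kl.1 • V.v (Polynomial.eval a (q n)) + 0) := by rw [zero_add, add_zero]
        _ ≤ _ := add_le_add hG (add_le_add le_rfl (nsmul_nonneg (hB_nonneg n) _))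
  have hStend : V.Tendsto (fun n => MvPolynomial.eval ![a, b] (S n)) 0 := by
    intro N
    obtain ⟨M1, hM1⟩ := hφa N
    obtain ⟨M2, hM2⟩ := hφb N
    refine ⟨max M1 M2, fun n hn => ?_⟩
    rw [sub_zero]
    refine le_trans (le_min ?_ ?_) (hSv n)
    · have := hM1 n (le_of_max_le_left hn)
      rw [sub_zero] at this
      rw [hA]
      exact this
    · have := hM2 n (le_of_max_le_right hn)
      rw [sub_zero] at this
      rw [hB]
      exact this
  have hQ0 : V.Tendsto (fun n => MvPolynomial.eval ![a, b] (Q n)) 0 := by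
    apply V.tendsto_of_close hStend
    intro N
    refine ⟨N.toNat, fun n hn => ?_⟩
    calc (N : WithTop ℤ) ≤ ((n : ℕ) : ℤ) := by rw [WithTop.coe_le_coe]; omega
    _ ≤ n • ε := nsmul_ge _ hε1
    _ ≤ _ := hQS_close n
  have hW0 : W = 0 := V.tendsto_unique hQu hQ0
  exact ⟨z, hz2, hzeps, hzpos, hW0 ▸ hW⟩

lemma nsmul_coe (n : ℕ) (a : ℤ) :
    n • ((a : ℤ) : WithTop ℤ) = (((n : ℤ) * a : ℤ) : WithTop ℤ) := by
  induction n with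
  | zero => simp
  | succ n ih =>
    rw [succ_nsmul, ih, ← WithTop.coe_add]
    congr 1
    push_cast
    ring

end DVF

open DVF

/-- Corollary 2.3. Let `K` be a complete discrete valuation field of
characteristic 0 with residue characteristic `p > 0`, and `φ : F → G` an isogeny of
formal groups over `O_K` of height 1 whose kernel `F[φ]` (of order `p`) is contained in
`F(K)`.  Set `t := v_K(D(φ))`.  Then every nonzero `x ∈ F[φ]` satisfies
`v_K(x) = t/(p-1)`; in particular `(p-1) ∣ t`. -/
theorem stmt4 (p : ℕ) (hp : p.Prime) (K : Type) [Field K] [CharZero K]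
    (V : DVF K) (hcomp : V.IsComplete) (hres : 0 < V.v (p : K))
    (Fg Gg : FGL K V) (φ : Isog V Fg Gg) (hht : HasHeight V p 1 φ.φ)
    (t : ℕ) (ht : V.v (PowerSeries.coeff (R := K) 1 φ.φ) = ((t : ℤ) : WithTop ℤ))
    -- the kernel of φ consists of exactly p elements, all of them in F(K) = m_K:
    (hker : ∃ S : Finset K, S.card = p ∧
      ∀ x : K, (0 < V.v x ∧ PSEval V φ.φ x 0) ↔ x ∈ S) :
    (∀ x : K, 0 < V.v x → PSEval V φ.φ x 0 → x ≠ 0 →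
        (p - 1) • V.v x = ((t : ℤ) : WithTop ℤ)) ∧ (p - 1) ∣ t := by
  classical
  have hp2 : 2 ≤ p := hp.two_le
  obtain ⟨S, hScard, hSmem⟩ := hker
  -- 0 is a root
  have hzero_root : PSEval V φ.φ (0 : K) 0 := by
    intro N
    refine ⟨0, fun m _ => ?_⟩
    have hsum : (∑ i ∈ Finset.range m, PowerSeries.coeff (R := K) i φ.φ * (0:K) ^ i) = 0 := by
      apply Finset.sum_eq_zero
      intro i _
      cases i with
      | zero => rw [φ.const, zero_mul]
      | succ i => rw [zero_pow (Nat.succ_ne_zero i), mul_zero]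
    simp only [hsum, sub_zero, V.v0]
    exact le_top
  have h0S : (0 : K) ∈ S := (hSmem 0).1 ⟨by rw [V.v0]; exact lt_top_iff_ne_top.2 (by simp),
    hzero_root⟩
  -- a nonzero root x
  obtain ⟨x, hxS, hxne⟩ : ∃ x ∈ S, x ≠ 0 := by
    have : 1 < S.card := by omega
    exact Finset.exists_mem_ne this 0
  obtain ⟨hxpos, hxroot⟩ := (hSmem x).2 hxS
  obtain ⟨w, hw⟩ : ∃ w : ℤ, V.v x = ((w : ℤ) : WithTop ℤ) := by
    have hne : V.v x ≠ ⊤ := fun h => hxne ((V.v_top_iff x).1 h)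
    lift V.v x to ℤ using hne with a ha
    exact ⟨a, rfl⟩
  have hw1 : 1 ≤ w := by
    have := hxpos
    rw [hw] at this
    exact_mod_cast one_le_of_pos this
  -- iterates under the formal group law
  have hiter : ∀ k : ℕ, ∃ u : K, 1 ≤ k →
      (2 • V.v x ≤ V.v (u - (k : K) * x) ∧ V.v x ≤ V.v u ∧ 0 < V.v u ∧ PSEval V φ.φ u 0) := by
    intro k
    induction k with
    | zero => exact ⟨0, by omega⟩
    | succ k ih =>
      rcases Nat.eq_zero_or_pos k with rfl | hk
      · refine ⟨x, fun _ => ⟨?_, le_rfl, hxpos, hxroot⟩⟩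
        have e : x - ((0 + 1 : ℕ) : K) * x = 0 := by push_cast; ring
        rw [e, V.v0]
        exact le_top
      · obtain ⟨u, hu⟩ := ih
        obtain ⟨h1, h2, h3, h4⟩ := hu hk
        obtain ⟨z, hz1, hz2, hz3, hz4⟩ := comp_root V hcomp φ h3 hxpos h4 hxroot
        refine ⟨z, fun _ => ⟨?_, le_trans (le_min h2 le_rfl) hz2, hz3, hz4⟩⟩
        have e : z - ((k + 1 : ℕ) : K) * x = (z - (u + x)) + (u - (k : K) * x) := by
          push_cast
          ring
        rw [e]
        have hminx : V.v x ≤ min (V.v u) (V.v x) := le_min h2 le_rfl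
        calc 2 • V.v x ≤ min (V.v (z - (u + x))) (V.v (u - (k : K) * x)) :=
              le_min (le_trans (nsmul_mono hminx 2) hz1) h1
        _ ≤ _ := V.v_add _ _
  choose uu huu using hiter
  -- the iterates have valuation w and are distinct
  have hvnat : ∀ k : ℕ, 1 ≤ k → k < p → V.v ((k : K)) = 0 := by
    intro k hk1 hkp
    apply V.v_coprime_eq_zero hres
    have : ¬ p ∣ k := by
      intro hdvd
      have := Nat.le_of_dvd (by omega) hdvd
      omega
    exact (Nat.coprime_comm.1 (hp.coprime_iff_not_dvd.2 this))
  have hkxv : ∀ k : ℕ, 1 ≤ k → k < p → V.v ((k : K) * x) = ((w : ℤ) : WithTop ℤ) := by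
    intro k hk1 hkp
    rw [V.v_mul, hvnat k hk1 hkp, hw, zero_add]
  have h2w : ((w : ℤ) : WithTop ℤ) < 2 • V.v x := by
    rw [hw, nsmul_coe, WithTop.coe_lt_coe]
    omega
  have hvu : ∀ k : ℕ, 1 ≤ k → k < p → V.v (uu k) = ((w : ℤ) : WithTop ℤ) := by
    intro k hk1 hkp
    obtain ⟨e1, _, _, _⟩ := huu k hk1
    have e : uu k = (k : K) * x + (uu k - (k : K) * x) := by ring
    rw [e, V.v_add_eq_left, hkxv k hk1 hkp]
    rw [hkxv k hk1 hkp]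
    exact lt_of_lt_of_le h2w e1
  have hne0 : ∀ k : ℕ, 1 ≤ k → k < p → uu k ≠ 0 := by
    intro k hk1 hkp h0
    have := hvu k hk1 hkp
    rw [h0, V.v0] at this
    exact (WithTop.coe_ne_top (a := w)) this.symm
  have hdist : ∀ i j : ℕ, 1 ≤ i → i < j → j < p → uu i ≠ uu j := by
    intro i j hi hij hjp heq
    obtain ⟨ei, _, _, _⟩ := huu i hi
    obtain ⟨ej, _, _, _⟩ := huu j (by omega)
    have e : uu j - uu i = ((j - i : ℕ) : K) * x
        + ((uu j - (j : K) * x) - (uu i - (i : K) * x)) := by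
      have hcast : ((j - i : ℕ) : K) = (j : K) - (i : K) := by
        push_cast [Nat.cast_sub (by omega : i ≤ j)]
        ring
      rw [hcast]
      ring
    have hv : V.v (uu j - uu i) = ((w : ℤ) : WithTop ℤ) := by
      rw [e, V.v_add_eq_left, hkxv (j - i) (by omega) (by omega)]
      rw [hkxv (j - i) (by omega) (by omega)]
      calc ((w : ℤ) : WithTop ℤ) < 2 • V.v x := h2w
      _ ≤ min (V.v (uu j - (j : K) * x)) (V.v (uu i - (i : K) * x)) := le_min ej ei
      _ ≤ _ := V.v_sub_ge _ _
    rw [heq, sub_self, V.v0] at hv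
    exact (WithTop.coe_ne_top (a := w)) hv.symm
  -- the kernel is exactly {0, uu 1, ..., uu (p-1)}
  set Sset : Finset K := insert (0 : K) ((Finset.range (p - 1)).image fun i => uu (i + 1))
    with hSsetdef
  have himcard : ((Finset.range (p - 1)).image fun i => uu (i + 1)).card = p - 1 := by
    rw [Finset.card_image_of_injOn, Finset.card_range]
    intro i hi j hj hij
    rw [Finset.mem_coe, Finset.mem_range] at hi hj
    by_contra hne
    rcases Nat.lt_or_ge i j with h | h
    · exact hdist (i + 1) (j + 1) (by omega) (by omega) (by omega) hij
    · have : j < i := by omega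
      exact hdist (j + 1) (i + 1) (by omega) (by omega) (by omega) hij.symm
  have h0nim : (0 : K) ∉ (Finset.range (p - 1)).image fun i => uu (i + 1) := by
    intro h0
    obtain ⟨i, hi, hi0⟩ := Finset.mem_image.1 h0
    rw [Finset.mem_range] at hi
    exact hne0 (i + 1) (by omega) (by omega) hi0
  have hSsetcard : Sset.card = p := by
    rw [hSsetdef, Finset.card_insert_of_notMem h0nim, himcard]
    omega
  have hsub : Sset ⊆ S := by
    intro y hy
    rw [hSsetdef, Finset.mem_insert] at hy
    rcases hy with rfl | hy
    · exact h0S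
    · obtain ⟨i, hi, rfl⟩ := Finset.mem_image.1 hy
      rw [Finset.mem_range] at hi
      obtain ⟨_, _, h3, h4⟩ := huu (i + 1) (by omega)
      exact (hSmem _).1 ⟨h3, h4⟩
  have hSeq : Sset = S := Finset.eq_of_subset_of_card_le hsub (by omega)
  -- every nonzero root has valuation w
  have hallv : ∀ y : K, 0 < V.v y → PSEval V φ.φ y 0 → y ≠ 0 →
      V.v y = ((w : ℤ) : WithTop ℤ) := by
    intro y hy hyroot hyne
    have hyS : y ∈ Sset := hSeq ▸ (hSmem y).1 ⟨hy, hyroot⟩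
    rw [hSsetdef, Finset.mem_insert] at hyS
    rcases hyS with rfl | hyS
    · exact absurd rfl hyne
    · obtain ⟨i, hi, rfl⟩ := Finset.mem_image.1 hyS
      rw [Finset.mem_range] at hi
      exact hvu (i + 1) (by omega) (by omega)
  -- dividing out the root T = 0 : shifted coefficients
  set c0 : ℕ → K := fun j => PowerSeries.coeff (R := K) (j + 1) φ.φ with hc0def
  have hshift : ∀ y : K, y ≠ 0 → PSEval V φ.φ y 0 → V.SEval c0 y 0 := by
    intro y hyne hy
    have key : ∀ n : ℕ, y * (∑ j ∈ Finset.range n, c0 j * y ^ j)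
        = ∑ i ∈ Finset.range (n + 1), PowerSeries.coeff (R := K) i φ.φ * y ^ i := by
      intro n
      rw [Finset.sum_range_succ' (fun i => PowerSeries.coeff (R := K) i φ.φ * y ^ i) n]
      rw [φ.const, Finset.mul_sum]
      simp only [pow_zero, mul_one, zero_mul, add_zero]
      apply Finset.sum_congr rfl
      intro j _
      rw [hc0def, pow_succ]
      ring
    have t1 : V.Tendsto (fun n => y * (∑ j ∈ Finset.range n, c0 j * y ^ j)) 0 := by
      apply V.tendsto_congr' (fun n => (key n).symm)
      exact V.tendsto_shift hy
    have t2 : V.Tendsto (fun n => y⁻¹ * (y * (∑ j ∈ Finset.range n, c0 j * y ^ j))) (y⁻¹ * 0) :=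
      V.tendsto_mul_const y⁻¹ t1
    have e : ∀ n, y⁻¹ * (y * (∑ j ∈ Finset.range n, c0 j * y ^ j))
        = ∑ j ∈ Finset.range n, c0 j * y ^ j := by
      intro n
      field_simp
    have := V.tendsto_congr' e t2
    rw [mul_zero] at this
    exact this
  -- height data
  obtain ⟨ψh, hψh_int, hψh1, hheight⟩ := hht
  have hc0_int : ∀ j, 0 ≤ V.v (c0 j) := fun j => φ.int_coeff (j + 1)
  have hc0_low : ∀ j, j < p - 1 → 0 < V.v (c0 j) := by
    intro j hj
    have h1 := hheight (j + 1)
    have hnd : ¬ p ^ 1 ∣ (j + 1) := by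
      rw [pow_one]
      intro hdvd
      have := Nat.le_of_dvd (by omega) hdvd
      omega
    rw [if_neg hnd, sub_zero] at h1
    exact h1
  have hc0_top : V.v (c0 (p - 1)) = 0 := by
    have h1 := hheight p
    have hd : p ^ 1 ∣ p := by rw [pow_one]
    rw [if_pos hd, pow_one, Nat.div_self (by omega : 0 < p)] at h1
    have e2 : p - 1 + 1 = p := by omega
    have e : c0 (p - 1) = PowerSeries.coeff (R := K) p φ.φ := by
      rw [hc0def]
      simp only
      rw [e2]
    rw [e]
    have e2 : PowerSeries.coeff (R := K) p φ.φ
        = PowerSeries.coeff (R := K) 1 ψh + (PowerSeries.coeff (R := K) p φ.φ - PowerSeries.coeff (R := K) 1 ψh) := by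
      ring
    rw [e2, V.v_add_eq_left, hψh1]
    rw [hψh1]
    exact h1
  have hc00 : V.v (c0 0) = ((t : ℤ) : WithTop ℤ) := ht
  have hc0_roots : ∀ i, 1 ≤ i → i ≤ p - 1 → V.SEval c0 (uu i) 0 := by
    intro i hi1 hip
    obtain ⟨_, _, _, h4⟩ := huu i hi1
    exact hshift (uu i) (hne0 i hi1 (by omega)) h4
  have huupos : ∀ i, 1 ≤ i → i ≤ p - 1 → 0 < V.v (uu i) := by
    intro i hi1 hip
    obtain ⟨_, _, h3, _⟩ := huu i hi1
    exact h3
  have huuv : ∀ i, 1 ≤ i → i ≤ p - 1 → V.v (uu i) = ((w : ℤ) : WithTop ℤ) :=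
    fun i h1 h2 => hvu i h1 (by omega)
  -- division chain
  have hchain : ∀ k : ℕ, k ≤ p - 1 → ∃ c : ℕ → K,
      (∀ j, 0 ≤ V.v (c j)) ∧
      (∀ j, j < p - 1 - k → 0 < V.v (c j)) ∧
      (V.v (c (p - 1 - k)) = 0) ∧
      (V.v (c 0) = (((t : ℤ) - (k : ℤ) * w : ℤ) : WithTop ℤ)) ∧
      (∀ i, k + 1 ≤ i → i ≤ p - 1 → V.SEval c (uu i) 0) := by
    intro k
    induction k with
    | zero =>
      intro _
      refine ⟨c0, hc0_int, by simpa using hc0_low, by simpa using hc0_top, ?_, fun i hi1 hip =>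
        hc0_roots i hi1 hip⟩
      rw [hc00]
      norm_num
    | succ k ih =>
      intro hk1
      obtain ⟨c, hint, hlow, htop, h0, hroots⟩ := ih (by omega)
      set z := uu (k + 1) with hzdef
      have hzpos : 0 < V.v z := huupos (k + 1) (by omega) (by omega)
      have hzv : V.v z = ((w : ℤ) : WithTop ℤ) := huuv (k + 1) (by omega) (by omega)
      have hzroot : V.SEval c z 0 := hroots (k + 1) le_rfl (by omega)
      obtain ⟨ψ, hψser, hψint, hψ0, hψrec, hψroots⟩ := V.div_root hcomp hint hzpos hzroot
      have hvz1 : (1 : WithTop ℤ) ≤ V.v z := one_le_of_pos hzpos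
      refine ⟨ψ, hψint, ?_, ?_, ?_, ?_⟩
      · -- strictly positive low coefficients
        intro j hj
        have hbound : ∀ i : ℕ, (1 : WithTop ℤ) ≤ V.v (c (j + 1 + i) * z ^ i) := by
          intro i
          rw [V.v_mul, V.v_pow]
          by_cases hcase : j + 1 + i < p - 1 - k
          · calc (1 : WithTop ℤ) ≤ V.v (c (j + 1 + i)) := one_le_of_pos (hlow _ hcase)
            _ = V.v (c (j + 1 + i)) + 0 := (add_zero _).symm
            _ ≤ _ := add_le_add le_rfl (nsmul_nonneg (le_trans (by norm_num) hvz1) i)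
          · have hi1 : 1 ≤ i := by omega
            calc (1 : WithTop ℤ) ≤ V.v z := hvz1
            _ = 1 • V.v z := (one_nsmul _).symm
            _ ≤ i • V.v z := nsmul_le_nsmul_of_le hi1 (le_trans (by norm_num) hvz1)
            _ = 0 + i • V.v z := (zero_add _).symm
            _ ≤ _ := add_le_add (hint _) le_rfl
        have h1le : (1 : WithTop ℤ) ≤ V.v (ψ j) := by
          apply V.v_lim_ge (hψser j) (M₀ := 0)
          intro m _
          exact V.v_finsetSum _ _ (fun i _ => hbound i)
        exact lt_of_lt_of_le (by norm_num) h1le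
      · -- the new top coefficient is a unit
        set n0 := p - 1 - (k + 1) with hn0def
        have hn1 : n0 + 1 = p - 1 - k := by omega
        apply V.v_lim_eq (V.tendsto_shift (hψser n0)) (M₀ := 0)
        intro m _
        rw [Finset.sum_range_succ' (fun i => c (n0 + 1 + i) * z ^ i) m]
        have hrest : (1 : WithTop ℤ) ≤ V.v (∑ i ∈ Finset.range m,
            c (n0 + 1 + (i + 1)) * z ^ (i + 1)) := by
          apply V.v_finsetSum
          intro i _
          rw [V.v_mul, V.v_pow]
          calc (1 : WithTop ℤ) ≤ V.v z := hvz1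
          _ = 1 • V.v z := (one_nsmul _).symm
          _ ≤ (i + 1) • V.v z := nsmul_le_nsmul_of_le (by omega) (le_trans (by norm_num) hvz1)
          _ = 0 + (i + 1) • V.v z := (zero_add _).symm
          _ ≤ _ := add_le_add (hint _) le_rfl
        have hfirst : V.v (c (n0 + 1) * z ^ 0) = ((0 : ℤ) : WithTop ℤ) := by
          rw [pow_zero, mul_one, hn1, htop]
          norm_num
        rw [add_comm, V.v_add_eq_left, hfirst]
        rw [hfirst]
        calc ((0 : ℤ) : WithTop ℤ) < 1 := by
              rw [← WithTop.coe_one, WithTop.coe_lt_coe]; omega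
        _ ≤ _ := hrest
      · -- the constant coefficient valuation
        have hv0 : V.v (c 0) = V.v z + V.v (ψ 0) := by
          rw [hψ0, V.v_neg, V.v_mul]
        have hψ0ne : V.v (ψ 0) ≠ ⊤ := by
          intro htop'
          rw [htop', add_top] at hv0
          rw [h0] at hv0
          exact (WithTop.coe_ne_top) hv0
        lift V.v (ψ 0) to ℤ using hψ0ne with s hs
        rw [h0, hzv, ← WithTop.coe_add] at hv0
        have : (t : ℤ) - (k : ℤ) * w = w + s := WithTop.coe_injective hv0
        have : s = (t : ℤ) - ((k : ℤ) + 1) * w := by linarith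
        rw [this, WithTop.coe_inj]
        push_cast
        ring
      · -- remaining roots
        intro i hi1 hip
        apply hψroots (uu i) (huupos i (by omega) hip) (hroots i (by omega) hip)
        exact fun h => hdist (k + 1) i (by omega) (by omega) (by omega) h.symm
  -- conclude : t = (p-1) * w
  obtain ⟨c, _, _, hctop, hc0v, _⟩ := hchain (p - 1) le_rfl
  have hkey : (t : ℤ) = ((p - 1 : ℕ) : ℤ) * w := by
    have e : p - 1 - (p - 1) = 0 := by omega
    rw [e] at hctop
    rw [hctop] at hc0v
    have := WithTop.coe_injective hc0v.symm
    have h0 : (t : ℤ) - ((p - 1 : ℕ) : ℤ) * w = 0 := by linear_combination this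
    linarith
  constructor
  · intro y hy hyroot hyne
    rw [hallv y hy hyroot hyne, nsmul_coe, WithTop.coe_inj, ← hkey]
  · refine ⟨w.toNat, ?_⟩
    have hwt : w = (w.toNat : ℤ) := by omega
    rw [hwt] at hkey
    exact_mod_cast hkey
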